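/- Let N : ℕ → ℕ be a function. For each dimension d ≥ 1, let X₁, …, X_{N(d)}, x be N(d)+1 independent random points, each uniformly distributed on the closed unit ball of ℝ^d, and let p_d denote the probability that x lies in the convex hull of {X₁, …, X_{N(d)}}. If N(d) · d · 2^{-d/2} → 0 as d → ∞, then p_d → 0 as d → ∞. -/

import Mathlib

open MeasureTheory Filter
open Metric in
section

/-- The uniform probability measure on the closed unit ball of `ℝ^d`. -/
noncomputable def uniformBall (d : ℕ) : Measure (EuclideanSpace ℝ (Fin d)) :=
  (volume (Metric.closedBall (0 : EuclideanSpace ℝ (Fin d)) 1))⁻¹ •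
    volume.restrict (Metric.closedBall (0 : EuclideanSpace ℝ (Fin d)) 1)

lemma volB_ne_zero (d : ℕ) : volume (closedBall (0 : EuclideanSpace ℝ (Fin d)) 1) ≠ 0 :=
  (measure_closedBall_pos volume _ one_pos).ne'

lemma volB_ne_top (d : ℕ) : volume (closedBall (0 : EuclideanSpace ℝ (Fin d)) 1) ≠ ⊤ :=
  measure_closedBall_lt_top.ne

instance uniformBall_isProb (d : ℕ) : IsProbabilityMeasure (uniformBall d) := by
  constructor
  rw [uniformBall, Measure.smul_apply, Measure.restrict_apply MeasurableSet.univ,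
    Set.univ_inter, smul_eq_mul, ENNReal.inv_mul_cancel (volB_ne_zero d) (volB_ne_top d)]

lemma uniformBall_closedBall_le (d : ℕ) (z : EuclideanSpace ℝ (Fin d)) {r : ℝ} (hr : 0 ≤ r) :
    uniformBall d (closedBall z r) ≤ ENNReal.ofReal (r ^ d) := by
  have h1 : volume (closedBall z r) = ENNReal.ofReal (r ^ d) * volume (ball (0 : EuclideanSpace ℝ (Fin d)) 1) := by
    simpa [finrank_euclideanSpace_fin] using Measure.addHaar_closedBall volume z hr
  have h2 : volume (closedBall z r) ≤ ENNReal.ofReal (r ^ d) * volume (closedBall (0 : EuclideanSpace ℝ (Fin d)) 1) :=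
    h1.le.trans (mul_le_mul_right (measure_mono ball_subset_closedBall) _)
  rw [uniformBall, Measure.smul_apply, Measure.restrict_apply measurableSet_closedBall, smul_eq_mul]
  calc (volume (closedBall (0 : EuclideanSpace ℝ (Fin d)) 1))⁻¹ * volume (closedBall z r ∩ closedBall 0 1)
      ≤ (volume (closedBall (0 : EuclideanSpace ℝ (Fin d)) 1))⁻¹ *
        (ENNReal.ofReal (r ^ d) * volume (closedBall (0 : EuclideanSpace ℝ (Fin d)) 1)) :=
        mul_le_mul_right ((measure_mono Set.inter_subset_left).trans h2) _
    _ = ENNReal.ofReal (r ^ d) := by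
        rw [← mul_assoc, mul_comm _ (ENNReal.ofReal (r ^ d)), mul_assoc,
          ENNReal.inv_mul_cancel (volB_ne_zero d) (volB_ne_top d), mul_one]

lemma uniformBall_ae (d : ℕ) : ∀ᵐ y ∂uniformBall d, ‖y‖ ≤ 1 := by
  rw [ae_iff, uniformBall, Measure.smul_apply]
  have : {y : EuclideanSpace ℝ (Fin d) | ¬ ‖y‖ ≤ 1} ∩ closedBall 0 1 = ∅ := by
    ext y; simp [mem_closedBall_zero_iff]
  rw [Measure.restrict_apply (by
    exact (measurableSet_le measurable_norm measurable_const).compl), this]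
  simp

lemma exists_inner_ge {d n : ℕ} (X : Fin n → EuclideanSpace ℝ (Fin d))
    (x : EuclideanSpace ℝ (Fin d)) (hx : x ∈ convexHull ℝ (Set.range X)) :
    ∃ i, ‖x‖ ^ 2 ≤ inner ℝ (X i) x := by
  by_contra h
  push_neg at h
  have hC : Convex ℝ {y : EuclideanSpace ℝ (Fin d) | inner ℝ y x < ‖x‖ ^ 2} := by
    refine convex_halfSpace_lt ⟨fun a b => ?_, fun c a => ?_⟩ _
    · exact inner_add_left a b x
    · exact real_inner_smul_left a x c
  have := convexHull_min (by rintro y ⟨i, rfl⟩; exact h i) hC hx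
  simp only [Set.mem_setOf_eq, real_inner_self_eq_norm_sq] at this
  exact lt_irrefl _ this

lemma r_facts : (0:ℝ) ≤ (2:ℝ)^(-(1:ℝ)/2) ∧ ((2:ℝ)^(-(1:ℝ)/2))^2 = 1/2 ∧ (2:ℝ)^(-(1:ℝ)/2) ≤ 1 := by
  refine ⟨Real.rpow_nonneg (by norm_num) _, ?_, ?_⟩
  · rw [← Real.rpow_natCast ((2:ℝ)^(-(1:ℝ)/2)) 2, ← Real.rpow_mul (by norm_num)]
    norm_num
  · exact Real.rpow_le_one_of_one_le_of_nonpos (by norm_num) (by norm_num)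

lemma dist_le_cap {d : ℕ} {y x : EuclideanSpace ℝ (Fin d)} (hy : ‖y‖ ≤ 1)
    (hin : ‖x‖ ^ 2 ≤ inner ℝ y x) (hx : (2:ℝ)^(-(1:ℝ)/2) ≤ ‖x‖) :
    dist y x ≤ (2:ℝ)^(-(1:ℝ)/2) := by
  obtain ⟨hr0, hr2, hr1⟩ := r_facts
  have hsq : ‖y - x‖ ^ 2 ≤ ((2:ℝ)^(-(1:ℝ)/2)) ^ 2 := by
    rw [norm_sub_sq_real, hr2]
    have h1 : ‖y‖ ^ 2 ≤ 1 := by nlinarith [norm_nonneg y]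
    have h2 : ((2:ℝ)^(-(1:ℝ)/2)) ^ 2 ≤ ‖x‖ ^ 2 := by nlinarith
    nlinarith
  rw [dist_eq_norm]
  exact (pow_le_pow_iff_left₀ (norm_nonneg _) hr0 two_ne_zero).1 hsq

/-- The probability that a new uniform sample from the unit ball of `ℝ^d` lies in the
convex hull of `n` i.i.d. uniform samples from that ball. -/
noncomputable def interpProb (d n : ℕ) : ENNReal :=
  ((Measure.pi fun _ : Fin n => uniformBall d).prod (uniformBall d))
    {p | p.2 ∈ convexHull ℝ (Set.range p.1)}

lemma interpProb_le (d n : ℕ) :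
    interpProb d n ≤ (n + 1) * ENNReal.ofReal (((2:ℝ)^(-(1:ℝ)/2)) ^ d) := by
  obtain ⟨hr0, hr2, hr1⟩ := r_facts
  set r : ℝ := (2:ℝ)^(-(1:ℝ)/2) with hrdef
  set μ : Measure (Fin n → EuclideanSpace ℝ (Fin d)) := Measure.pi fun _ : Fin n => uniformBall d with hμ
  set ν : Measure (EuclideanSpace ℝ (Fin d)) := uniformBall d with hν
  set c : ENNReal := ENNReal.ofReal (r ^ d) with hc
  -- the three families of sets
  set A : Set ((Fin n → EuclideanSpace ℝ (Fin d)) × EuclideanSpace ℝ (Fin d)) :=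
    {p | ‖p.2‖ < r} with hA
  set D : Fin n → Set ((Fin n → EuclideanSpace ℝ (Fin d)) × EuclideanSpace ℝ (Fin d)) :=
    fun i => {p | dist (p.1 i) p.2 ≤ r} with hD
  set E : Fin n → Set ((Fin n → EuclideanSpace ℝ (Fin d)) × EuclideanSpace ℝ (Fin d)) :=
    fun i => {p | 1 < ‖p.1 i‖} with hE
  have hsub : {p : (Fin n → EuclideanSpace ℝ (Fin d)) × EuclideanSpace ℝ (Fin d) |
      p.2 ∈ convexHull ℝ (Set.range p.1)} ⊆ A ∪ ⋃ i, (D i ∪ E i) := by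
    rintro ⟨X, x⟩ hp
    by_cases hx : ‖x‖ < r
    · exact Or.inl hx
    · push_neg at hx
      obtain ⟨i, hi⟩ := exists_inner_ge X x hp
      refine Or.inr (Set.mem_iUnion.2 ⟨i, ?_⟩)
      by_cases hXi : ‖X i‖ ≤ 1
      · exact Or.inl (dist_le_cap hXi hi hx)
      · exact Or.inr (not_le.1 hXi)
  have hE0 : ∀ i, (μ.prod ν) (E i) = 0 := by
    intro i
    have ht : uniformBall d {y : EuclideanSpace ℝ (Fin d) | 1 < ‖y‖} = 0 := by
      have := uniformBall_ae d
      rw [ae_iff] at this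
      simpa [not_le] using this
    have hμ0 : μ ((Function.eval i) ⁻¹' {y : EuclideanSpace ℝ (Fin d) | 1 < ‖y‖}) = 0 :=
      Measure.pi_eval_preimage_null _ ht
    have hEeq : E i = ((Function.eval i) ⁻¹' {y : EuclideanSpace ℝ (Fin d) | 1 < ‖y‖}) ×ˢ Set.univ := by
      ext ⟨X, x⟩; simp [hE, Function.eval]
    rw [hEeq, Measure.prod_prod, hμ0, zero_mul]
  have hA_le : (μ.prod ν) A ≤ c := by
    have hAeq : A = (Set.univ : Set (Fin n → EuclideanSpace ℝ (Fin d))) ×ˢ {y : EuclideanSpace ℝ (Fin d) | ‖y‖ < r} := by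
      ext ⟨X, x⟩; simp [hA]
    rw [hAeq, Measure.prod_prod, measure_univ, one_mul]
    refine le_trans (measure_mono ?_) (uniformBall_closedBall_le d 0 hr0)
    intro y hy
    simpa [mem_closedBall_zero_iff] using le_of_lt hy
  have hD_le : ∀ i, (μ.prod ν) (D i) ≤ c := by
    intro i
    have hmeas : MeasurableSet (D i) := by
      have : Continuous fun p : (Fin n → EuclideanSpace ℝ (Fin d)) × EuclideanSpace ℝ (Fin d) =>
          dist (p.1 i) p.2 := Continuous.dist ((continuous_apply i).comp continuous_fst) continuous_snd
      exact measurableSet_le this.measurable measurable_const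
    rw [Measure.prod_apply hmeas]
    calc ∫⁻ X, ν (Prod.mk X ⁻¹' D i) ∂μ ≤ ∫⁻ _, c ∂μ := by
          refine lintegral_mono fun X => ?_
          refine le_trans (measure_mono ?_) (uniformBall_closedBall_le d (X i) hr0)
          intro x hx
          exact mem_closedBall'.2 hx
      _ = c := by simp
  calc interpProb d n ≤ (μ.prod ν) (A ∪ ⋃ i, (D i ∪ E i)) := measure_mono hsub
    _ ≤ (μ.prod ν) A + ∑' i, (μ.prod ν) (D i ∪ E i) :=
        le_trans (measure_union_le _ _) (by gcongr; exact measure_iUnion_le _)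
    _ ≤ c + ∑' _ : Fin n, c := by
        gcongr with i
        · exact le_trans (measure_union_le _ _) (by rw [hE0 i, add_zero]; exact hD_le i)
    _ = (n + 1) * c := by
        rw [tsum_fintype]
        simp [Finset.sum_const, mul_comm, add_mul, add_comm]

lemma rpow_pow_eq (d : ℕ) : ((2:ℝ)^(-(1:ℝ)/2)) ^ d = (2:ℝ) ^ (-(d:ℝ)/2) := by
  rw [← Real.rpow_natCast ((2:ℝ)^(-(1:ℝ)/2)) d, ← Real.rpow_mul (by norm_num)]
  ring_nf

theorem barany_furedi_lower (N : ℕ → ℕ)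
    (hN : Tendsto (fun d : ℕ => (N d : ℝ) * d * (2 : ℝ) ^ (-(d : ℝ) / 2)) atTop (nhds 0)) :
    Tendsto (fun d : ℕ => interpProb d (N d)) atTop (nhds 0) := by
  obtain ⟨hr0, hr2, hr1⟩ := r_facts
  set r : ℝ := (2:ℝ)^(-(1:ℝ)/2) with hrdef
  have hrlt : r < 1 := Real.rpow_lt_one_of_one_lt_of_neg (by norm_num) (by norm_num)
  -- real-valued bound tends to 0
  have h2 : Tendsto (fun d : ℕ => r ^ d) atTop (nhds 0) :=
    tendsto_pow_atTop_nhds_zero_of_lt_one hr0 hrlt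
  have h1 : Tendsto (fun d : ℕ => (N d : ℝ) * r ^ d) atTop (nhds 0) := by
    refine tendsto_of_tendsto_of_tendsto_of_le_of_le' tendsto_const_nhds hN ?_ ?_
    · exact Eventually.of_forall fun d => by positivity
    · filter_upwards [eventually_ge_atTop 1] with d hd
      rw [rpow_pow_eq]
      have : (1:ℝ) ≤ (d:ℝ) := by exact_mod_cast hd
      have h0 : (0:ℝ) ≤ (N d : ℝ) * (2:ℝ) ^ (-(d:ℝ)/2) := by positivity
      calc (N d : ℝ) * (2:ℝ) ^ (-(d:ℝ)/2) = (N d : ℝ) * 1 * (2:ℝ) ^ (-(d:ℝ)/2) := by ring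
        _ ≤ (N d : ℝ) * (d:ℝ) * (2:ℝ) ^ (-(d:ℝ)/2) := by
            have := Real.rpow_nonneg (by norm_num : (0:ℝ) ≤ 2) (-(d:ℝ)/2)
            nlinarith [Nat.cast_nonneg (α := ℝ) (N d)]
  have hf : Tendsto (fun d : ℕ => ((N d : ℝ) + 1) * r ^ d) atTop (nhds 0) := by
    have := h1.add h2
    simpa [add_mul] using this
  refine tendsto_of_tendsto_of_tendsto_of_le_of_le' tendsto_const_nhds
    (show Tendsto (fun d : ℕ => ENNReal.ofReal (((N d : ℝ) + 1) * r ^ d)) atTop (nhds 0) by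
      simpa using ENNReal.tendsto_ofReal hf)
    (Eventually.of_forall fun d => zero_le) ?_
  refine Eventually.of_forall fun d => ?_
  refine le_trans (interpProb_le d (N d)) (le_of_eq ?_)
  rw [ENNReal.ofReal_mul (by positivity), ENNReal.ofReal_add (by positivity) zero_le_one]
  simp [hrdef]

end
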